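/- arXiv:2106.10630 — 2 statements merged into one kernel-verified Lean document; each statement's English description precedes it below -/
import Mathlib

section
/- In the cohit space (QP_5)_67, the classes [x_1x_2x_3x_4x_5·a²], where a ranges over the admissible monomials of degree 31 in P_5, are pairwise distinct and form a linearly independent set over 𝔽₂. -/
open MvPolynomial

noncomputable section

/-- `P n` is the polynomial algebra `𝔽₂[x_1, …, x_n]`. -/
abbrev P (n : ℕ) : Type := MvPolynomial (Fin n) (ZMod 2)

/-- The total Steenrod square: the `𝔽₂`-algebra endomorphism of `P n`
with `Sq (x_j) = x_j + x_j ^ 2`. -/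
def SqT (n : ℕ) : P n →ₐ[ZMod 2] P n := aeval fun j => X j + X j ^ 2

/-- `u` is hit (in degree `d`): `u = ∑_{i ≥ 1} Sq^i (f i)` where `f i` is homogeneous
of degree `d - i`; here `Sq^i (f i)` is the degree-`d` homogeneous component of
`Sq (f i)`. -/
def IsHit (n d : ℕ) (u : P n) : Prop :=
  ∃ f : ℕ → P n,
    (∀ i, f i ∈ homogeneousSubmodule (Fin n) (ZMod 2) (d - i)) ∧
    u = ∑ i ∈ Finset.Icc 1 d, homogeneousComponent d (SqT n (f i))

/-- The homogeneous part `(P_n)_d`. -/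
abbrev homSub (n d : ℕ) : Submodule (ZMod 2) (P n) := homogeneousSubmodule (Fin n) (ZMod 2) d

/-- The subspace of hit elements of degree `d` (the span of the set of hit elements;
this set is already closed under addition, so this is just the set of hit elements). -/
def hitSub (n d : ℕ) : Submodule (ZMod 2) (P n) := Submodule.span (ZMod 2) {u | IsHit n d u}

/-- The cohit space `(QP_n)_d = (P_n)_d / (A⁺P_n)_d`. -/
abbrev QP (n d : ℕ) : Type :=
  ↥(homSub n d) ⧸ (hitSub n d).comap (homSub n d).subtype

/-- The class `[f]` in `(QP_n)_d` of a polynomial `f` (via its degree-`d` homogeneous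
component; for `f` homogeneous of degree `d` this is the class of `f` itself). -/
def cls (n d : ℕ) (f : P n) : QP n d :=
  Submodule.Quotient.mk
    ⟨homogeneousComponent d f,
      (mem_homogeneousSubmodule _ _).2 (homogeneousComponent_isHomogeneous d f)⟩

/-- The monomial `x^a = x_1^{a_1} ⋯ x_n^{a_n}`. -/
def mono {n : ℕ} (a : Fin n →₀ ℕ) : P n := monomial a 1

/-- The (total) degree of the monomial with exponent vector `a`. -/
def degA {n : ℕ} (a : Fin n →₀ ℕ) : ℕ := ∑ i, a i

/-- The weight vector: `wVec a t = ω_{t+1}(x^a) = ∑_j α_t(a_j)`. -/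
def wVec {n : ℕ} (a : Fin n →₀ ℕ) : ℕ → ℕ :=
  fun t => ∑ j, if Nat.testBit (a j) t then 1 else 0

/-- Left lexicographic (strict) order on sequences. -/
def lexLtN (f g : ℕ → ℕ) : Prop := ∃ i, (∀ j, j < i → f j = g j) ∧ f i < g i

/-- Left lexicographic (strict) order on exponent vectors. -/
def lexLtS {n : ℕ} (a b : Fin n →₀ ℕ) : Prop :=
  ∃ i : Fin n, (∀ j, j < i → a j = b j) ∧ a i < b i

/-- The order on monomials: `u < v` iff `ω(u) < ω(v)` lexicographically, or
`ω(u) = ω(v)` and `σ(u) < σ(v)` lexicographically. -/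
def monLt {n : ℕ} (a b : Fin n →₀ ℕ) : Prop :=
  lexLtN (wVec a) (wVec b) ∨ (wVec a = wVec b ∧ lexLtS a b)

/-- A monomial is admissible iff it is not inadmissible, i.e. there is no finite set of
monomials of the same degree, all smaller than it, such that subtracting their sum
yields a hit polynomial. -/
def Admissible {n : ℕ} (a : Fin n →₀ ℕ) : Prop :=
  ¬ ∃ S : Finset (Fin n →₀ ℕ),
      (∀ b ∈ S, degA b = degA a ∧ monLt b a) ∧
      IsHit n (degA a) (mono a - ∑ b ∈ S, mono b)

/-- `P_n^0`: the span of the monomials in which some variable has exponent `0`. -/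
def PzeroSub (n : ℕ) : Submodule (ZMod 2) (P n) :=
  Submodule.span (ZMod 2) {x : P n | ∃ a : Fin n →₀ ℕ, (∃ i, a i = 0) ∧ x = mono a}

/-- `P_n^+`: the span of the monomials in which every variable occurs. -/
def PplusSub (n : ℕ) : Submodule (ZMod 2) (P n) :=
  Submodule.span (ZMod 2) {x : P n | ∃ a : Fin n →₀ ℕ, (∀ i, 0 < a i) ∧ x = mono a}

/-- `(QP_n^0)_d`: the image of `(P_n^0)_d` in `(QP_n)_d`. -/
def Qzero (n d : ℕ) : Submodule (ZMod 2) (QP n d) :=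
  (((PzeroSub n).comap (homSub n d).subtype)).map
    ((hitSub n d).comap (homSub n d).subtype).mkQ

/-- `(QP_n^+)_d`: the image of `(P_n^+)_d` in `(QP_n)_d`. -/
def Qplus (n d : ℕ) : Submodule (ZMod 2) (QP n d) :=
  (((PplusSub n).comap (homSub n d).subtype)).map
    ((hitSub n d).comap (homSub n d).subtype).mkQ

/-- Kameko-type map `S_5 : P_5 → P_5`, the `𝔽₂`-linear map with
`S_5(x_1x_2x_3x_4x_5 · y²) = y` on monomials of that form and `S_5 = 0` on all
other monomials. -/
def S5 : P 5 →ₗ[ZMod 2] P 5 :=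
  (basisMonomials (Fin 5) (ZMod 2)).constr (ZMod 2) fun a =>
    if ∀ i, Odd (a i) then mono (Finsupp.equivFunOnFinite.symm fun i => a i / 2) else 0

/-- `Φ(f) = x_1x_2x_3x_4x_5 · f²`. -/
def Phi (f : P 5) : P 5 := (∏ i : Fin 5, X i) * f ^ 2

namespace Statement0Aux

open Finsupp

/-! ### Basic monomial lemmas -/

lemma S5_mono (a : Fin 5 →₀ ℕ) :
    S5 (mono a) =
      if ∀ i, Odd (a i) then mono (Finsupp.equivFunOnFinite.symm fun i => a i / 2) else 0 := by
  have h : mono a = basisMonomials (Fin 5) (ZMod 2) a := by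
    rw [coe_basisMonomials]; rfl
  rw [h, S5, Module.Basis.constr_basis]

lemma mono_mul (a b : Fin 5 →₀ ℕ) : mono a * mono b = mono (a + b) := by
  simp [mono, monomial_mul]

lemma mono_sq (a : Fin 5 →₀ ℕ) : (mono a) ^ 2 = mono (2 • a) := by
  simp [mono, monomial_pow]

/-- Squaring as a linear map over `𝔽₂`. -/
def sqL : P 5 →ₗ[ZMod 2] P 5 where
  toFun r := r ^ 2
  map_add' x y := CharTwo.add_sq x y
  map_smul' c r := by
    have hc : c ^ 2 = c := by revert c; decide
    show (c • r) ^ 2 = c • r ^ 2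
    rw [smul_pow, hc]

lemma S5_mono_mul_sq (m u : Fin 5 →₀ ℕ) :
    S5 (mono m * (mono u) ^ 2) = S5 (mono m) * mono u := by
  rw [mono_sq, mono_mul, S5_mono, S5_mono]
  have happ : ∀ i : Fin 5, (m + 2 • u) i = m i + 2 * u i := by
    intro i; simp [Finsupp.add_apply, Finsupp.smul_apply]
  by_cases h : ∀ i, Odd (m i)
  · rw [if_pos, if_pos h]
    · rw [mono_mul]
      congr 1
      ext i
      simp only [Finsupp.add_apply, Finsupp.smul_apply, smul_eq_mul,
        Finsupp.equivFunOnFinite_symm_apply_apply]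
      omega
    · intro i
      have h1 := h i
      rw [Nat.odd_iff] at h1 ⊢
      rw [happ i]
      omega
  · rw [if_neg, if_neg h, zero_mul]
    intro hall
    apply h
    intro i
    have h1 := hall i
    rw [happ i, Nat.odd_iff] at h1
    rw [Nat.odd_iff]
    omega

lemma S5_mul_sq (p r : P 5) : S5 (p * r ^ 2) = S5 p * r := by
  have key : ∀ m : Fin 5 →₀ ℕ, ∀ r : P 5, S5 (mono m * r ^ 2) = S5 (mono m) * r := by
    intro m
    have h : (S5 ∘ₗ LinearMap.mulLeft (ZMod 2) (mono m) ∘ₗ sqL)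
        = LinearMap.mulLeft (ZMod 2) (S5 (mono m)) := by
      apply Module.Basis.ext (basisMonomials (Fin 5) (ZMod 2))
      intro u
      have hb : basisMonomials (Fin 5) (ZMod 2) u = mono u := by
        rw [coe_basisMonomials]; rfl
      simp only [hb, LinearMap.comp_apply, LinearMap.mulLeft_apply]
      exact S5_mono_mul_sq m u
    intro r
    exact congrArg (fun (F : P 5 →ₗ[ZMod 2] P 5) => F r) h
  have h : (S5 ∘ₗ LinearMap.mulRight (ZMod 2) (r ^ 2))
      = LinearMap.mulRight (ZMod 2) r ∘ₗ S5 := by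
    apply Module.Basis.ext (basisMonomials (Fin 5) (ZMod 2))
    intro m
    have hb : basisMonomials (Fin 5) (ZMod 2) m = mono m := by
      rw [coe_basisMonomials]; rfl
    simp only [hb, LinearMap.comp_apply, LinearMap.mulRight_apply]
    exact key m r
  exact congrArg (fun (F : P 5 →ₗ[ZMod 2] P 5) => F p) h


/-! ### `SqT` on monomials -/

lemma SqT_mono (a : Fin 5 →₀ ℕ) :
    SqT 5 (mono a) = ∏ i, ((X i : P 5) + X i ^ 2) ^ (a i) := by
  show (aeval fun j => (X j : P 5) + X j ^ 2) (monomial a 1) = _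
  rw [aeval_monomial, map_one, one_mul]
  exact Finsupp.prod_fintype _ _ (fun i => pow_zero _)

/-- The "odd part" exponent vector. -/
def eP (a : Fin 5 →₀ ℕ) : Fin 5 →₀ ℕ := Finsupp.equivFunOnFinite.symm fun i => a i % 2

/-- The "halved" exponent vector. -/
def qP (a : Fin 5 →₀ ℕ) : Fin 5 →₀ ℕ := Finsupp.equivFunOnFinite.symm fun i => a i / 2

lemma eP_apply (a : Fin 5 →₀ ℕ) (i : Fin 5) : eP a i = a i % 2 := rfl

lemma qP_apply (a : Fin 5 →₀ ℕ) (i : Fin 5) : qP a i = a i / 2 := rfl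

lemma mono_decomp (a : Fin 5 →₀ ℕ) : mono a = mono (eP a) * (mono (qP a)) ^ 2 := by
  rw [mono_sq, mono_mul]
  congr 1
  ext i
  simp only [Finsupp.add_apply, Finsupp.smul_apply, smul_eq_mul, eP_apply, qP_apply]
  omega

lemma S5_eq_zero_of_not_mem_vars (p : P 5) (i0 : Fin 5) (h : i0 ∉ p.vars) : S5 p = 0 := by
  have hsup : ∀ b ∈ p.support, b i0 = 0 := by
    intro b hb
    by_contra hb0
    exact h ((mem_vars i0).2 ⟨b, hb, Finsupp.mem_support_iff.2 hb0⟩)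
  conv_lhs => rw [p.as_sum]
  rw [map_sum]
  refine Finset.sum_eq_zero fun b hb => ?_
  have hm : (monomial b (coeff b p) : P 5) = (coeff b p) • mono b := by
    rw [mono, smul_monomial, smul_eq_mul, mul_one]
  rw [hm, map_smul, S5_mono, if_neg, smul_zero]
  intro hall
  have := hall i0
  rw [hsup b hb] at this
  simp [Nat.odd_iff] at this

lemma S5_SqT_squarefree (e : Fin 5 →₀ ℕ) (he : ∀ i, e i ≤ 1) :
    S5 (SqT 5 (mono e)) = if ∀ i, e i = 1 then 1 else 0 := by
  classical
  by_cases h : ∀ i, e i = 1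
  · rw [if_pos h, SqT_mono]
    have hprod : (∏ i, ((X i : P 5) + X i ^ 2) ^ (e i)) = ∏ i, ((X i : P 5) + X i ^ 2) :=
      Finset.prod_congr rfl fun i _ => by rw [h i, pow_one]
    rw [hprod, Finset.prod_add, map_sum]
    have hterm : ∀ t : Finset (Fin 5),
        (∏ i ∈ t, (X i : P 5)) * ∏ i ∈ Finset.univ \ t, (X i : P 5) ^ 2
          = mono (Finsupp.equivFunOnFinite.symm fun i => if i ∈ t then 1 else 2) := by
      intro t
      set b : Fin 5 →₀ ℕ := Finsupp.equivFunOnFinite.symm fun i => if i ∈ t then 1 else 2 with hbdef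
      have hbapp : ∀ i, b i = if i ∈ t then 1 else 2 := fun i => rfl
      have hbsup : b.support = Finset.univ := by
        ext i
        simp only [Finsupp.mem_support_iff, hbapp i, Finset.mem_univ, iff_true]
        split <;> omega
      have h1 : mono b = ∏ i ∈ b.support, (X i : P 5) ^ b i := (prod_X_pow_eq_monomial).symm
      rw [h1, hbsup, ← Finset.prod_sdiff (Finset.subset_univ t), mul_comm]
      congr 1
      · refine Finset.prod_congr rfl fun i hi => ?_
        rw [hbapp i, if_neg (Finset.mem_sdiff.1 hi).2]
      · refine Finset.prod_congr rfl fun i hi => ?_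
        rw [hbapp i, if_pos hi, pow_one]
    have hS5term : ∀ t ∈ Finset.univ.powerset,
        S5 ((∏ i ∈ t, (X i : P 5)) * ∏ i ∈ Finset.univ \ t, (X i : P 5) ^ 2)
          = if t = Finset.univ then 1 else 0 := by
      intro t _
      rw [hterm t, S5_mono]
      by_cases ht : t = Finset.univ
      · rw [if_pos ht, if_pos]
        · rw [ht]
          have h0 : (Finsupp.equivFunOnFinite.symm fun i : Fin 5 =>
              (Finsupp.equivFunOnFinite.symm fun i : Fin 5 =>
                if i ∈ (Finset.univ : Finset (Fin 5)) then 1 else 2) i / 2) = 0 := by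
            ext i
            simp [Finsupp.equivFunOnFinite_symm_apply_apply]
          rw [h0, mono, monomial_zero', map_one]
        · intro i
          show Odd ((if i ∈ t then 1 else 2))
          rw [ht, if_pos (Finset.mem_univ i)]
          decide
      · rw [if_neg ht, if_neg]
        intro hall
        obtain ⟨i0, hi0⟩ : ∃ i0, i0 ∉ t := by
          by_contra hc
          push_neg at hc
          exact ht (Finset.eq_univ_iff_forall.2 hc)
        have := hall i0
        show False
        rw [show (Finsupp.equivFunOnFinite.symm fun i => if i ∈ t then 1 else 2) i0
            = if i0 ∈ t then 1 else 2 from rfl, if_neg hi0] at this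
        simp [Nat.odd_iff] at this
    rw [Finset.sum_congr rfl hS5term]
    rw [Finset.sum_ite_eq' Finset.univ.powerset Finset.univ (fun _ => (1 : P 5))]
    rw [if_pos (Finset.mem_powerset_self _)]
  · rw [if_neg h]
    push_neg at h
    obtain ⟨i0, hi0⟩ := h
    have hi0' : e i0 = 0 := by have := he i0; omega
    apply S5_eq_zero_of_not_mem_vars _ i0
    rw [SqT_mono]
    intro hmem
    have hsub := vars_prod (s := (Finset.univ : Finset (Fin 5)))
      (f := fun i => ((X i : P 5) + X i ^ 2) ^ (e i)) hmem
    rw [Finset.mem_biUnion] at hsub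
    obtain ⟨i, _, hvi⟩ := hsub
    by_cases hii : i = i0
    · subst hii
      simp only [hi0', pow_zero, vars_one] at hvi
      exact Finset.notMem_empty _ hvi
    · have : i0 ∈ ((X i : P 5) + X i ^ 2).vars := vars_pow _ _ hvi
      have h2 : ((X i : P 5) + X i ^ 2).vars ⊆ {i} := by
        refine (vars_add_subset _ _).trans ?_
        intro j hj
        rcases Finset.mem_union.1 hj with hj | hj
        · rwa [vars_X] at hj
        · have := vars_pow (X i : P 5) 2 hj
          rwa [vars_X] at this
      have := h2 this
      simp at this
      exact hii this.symm
/-! ### `S5` commutes with `SqT` -/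

lemma S5_SqT_mono (a : Fin 5 →₀ ℕ) : S5 (SqT 5 (mono a)) = SqT 5 (S5 (mono a)) := by
  have h1 : SqT 5 (mono a) = SqT 5 (mono (eP a)) * (SqT 5 (mono (qP a))) ^ 2 := by
    rw [← map_pow, ← map_mul, ← mono_decomp]
  rw [h1, S5_mul_sq, S5_SqT_squarefree (eP a) (fun i => by rw [eP_apply]; omega), S5_mono]
  by_cases h : ∀ i, Odd (a i)
  · rw [if_pos, if_pos h, one_mul]
    · rfl
    · intro i
      have := h i
      rw [Nat.odd_iff] at this
      rw [eP_apply, this]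
  · rw [if_neg, if_neg h, zero_mul, map_zero]
    intro hall
    apply h
    intro i
    have := hall i
    rw [eP_apply] at this
    rw [Nat.odd_iff]
    omega

lemma S5_SqT (p : P 5) : S5 (SqT 5 p) = SqT 5 (S5 p) := by
  have h : (S5 ∘ₗ (SqT 5).toLinearMap) = ((SqT 5).toLinearMap ∘ₗ S5) := by
    apply Module.Basis.ext (basisMonomials (Fin 5) (ZMod 2))
    intro a
    have hb : basisMonomials (Fin 5) (ZMod 2) a = mono a := by
      rw [coe_basisMonomials]; rfl
    simp only [hb, LinearMap.comp_apply, AlgHom.toLinearMap_apply]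
    exact S5_SqT_mono a
  exact congrArg (fun (F : P 5 →ₗ[ZMod 2] P 5) => F p) h

/-! ### Degrees and homogeneity -/

lemma degree_eq_degA (b : Fin 5 →₀ ℕ) : b.degree = degA b :=
  Finset.sum_subset (Finset.subset_univ _)
    (fun i _ hi => Finsupp.notMem_support_iff.mp hi)

lemma mono_mem_homSub (b : Fin 5 →₀ ℕ) : mono b ∈ homSub 5 (degA b) :=
  (mem_homogeneousSubmodule _ _).2 (isHomogeneous_monomial 1 (degree_eq_degA b))

lemma homogeneousComponent_mono (n : ℕ) (b : Fin 5 →₀ ℕ) :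
    homogeneousComponent n (mono b : P 5) = if degA b = n then mono b else 0 := by
  rw [homogeneousComponent_of_mem (mono_mem_homSub b)]
  by_cases h : degA b = n
  · rw [if_pos h, if_pos h.symm]
  · rw [if_neg h, if_neg (fun hh => h hh.symm)]

lemma degA_odd_decomp (b : Fin 5 →₀ ℕ) (h : ∀ i, Odd (b i)) :
    degA b = 2 * degA (Finsupp.equivFunOnFinite.symm fun i => b i / 2) + 5 := by
  show (∑ i, b i) = 2 * (∑ i, (Finsupp.equivFunOnFinite.symm fun i : Fin 5 => b i / 2) i) + 5
  have happ : ∀ i : Fin 5, (Finsupp.equivFunOnFinite.symm fun i : Fin 5 => b i / 2) i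
      = b i / 2 := fun i => rfl
  rw [Finset.sum_congr rfl fun i _ => happ i]
  have hb : ∀ i : Fin 5, b i = 2 * (b i / 2) + 1 := by
    intro i
    have := h i
    rw [Nat.odd_iff] at this
    omega
  rw [Finset.sum_congr rfl fun i (_ : i ∈ Finset.univ) => hb i]
  rw [Finset.sum_add_distrib, ← Finset.mul_sum]
  simp

lemma S5_mem_homSub {m : ℕ} {f : P 5} (hf : f ∈ homSub 5 (2 * m + 5)) :
    S5 f ∈ homSub 5 m := by
  rw [f.as_sum, map_sum]
  apply Submodule.sum_mem
  intro b hb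
  have hm : (monomial b (coeff b f) : P 5) = (coeff b f) • mono b := by
    rw [mono, smul_monomial, smul_eq_mul, mul_one]
  rw [hm, map_smul]
  apply Submodule.smul_mem
  rw [S5_mono]
  by_cases h : ∀ i, Odd (b i)
  · rw [if_pos h]
    have hdeg : degA b = 2 * m + 5 := by
      have h1 := (mem_homogeneousSubmodule _ _).1 hf (Finsupp.mem_support_iff.1 hb)
      rw [← degree_eq_degA, Finsupp.degree_eq_weight_one]
      exact h1
    have := degA_odd_decomp b h
    have hm' : degA (Finsupp.equivFunOnFinite.symm fun i => b i / 2) = m := by omega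
    rw [← hm']
    exact mono_mem_homSub _
  · rw [if_neg h]
    exact Submodule.zero_mem _

lemma S5_eq_zero_of_deg {D : ℕ} (hD : ∀ m, D ≠ 2 * m + 5) {f : P 5} (hf : f ∈ homSub 5 D) :
    S5 f = 0 := by
  conv_lhs => rw [f.as_sum]
  rw [map_sum]
  refine Finset.sum_eq_zero fun b hb => ?_
  have hm : (monomial b (coeff b f) : P 5) = (coeff b f) • mono b := by
    rw [mono, smul_monomial, smul_eq_mul, mul_one]
  rw [hm, map_smul, S5_mono, if_neg, smul_zero]
  intro h
  have hdeg : degA b = D := by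
    have h1 := (mem_homogeneousSubmodule _ _).1 hf (Finsupp.mem_support_iff.1 hb)
    rw [← degree_eq_degA, Finsupp.degree_eq_weight_one]
    exact h1
  exact hD _ (by rw [← hdeg]; exact degA_odd_decomp b h)

lemma S5_homogeneousComponent (g : P 5) :
    S5 (homogeneousComponent 67 g) = homogeneousComponent 31 (S5 g) := by
  have h : (S5 ∘ₗ homogeneousComponent 67) = ((homogeneousComponent 31 : P 5 →ₗ[ZMod 2] P 5) ∘ₗ S5) := by
    apply Module.Basis.ext (basisMonomials (Fin 5) (ZMod 2))
    intro b
    have hb : basisMonomials (Fin 5) (ZMod 2) b = mono b := by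
      rw [coe_basisMonomials]; rfl
    simp only [hb, LinearMap.comp_apply]
    rw [homogeneousComponent_mono, S5_mono]
    by_cases h : ∀ i, Odd (b i)
    · have hdec := degA_odd_decomp b h
      by_cases h67 : degA b = 67
      · rw [if_pos h67, S5_mono, if_pos h, homogeneousComponent_mono, if_pos (by omega)]
      · rw [if_neg h67, if_pos h, homogeneousComponent_mono, if_neg (by omega), map_zero]
    · by_cases h67 : degA b = 67
      · rw [if_pos h67, S5_mono, if_neg h, map_zero]
      · rw [if_neg h67, if_neg h, map_zero, map_zero]
  exact congrArg (fun (F : P 5 →ₗ[ZMod 2] P 5) => F g) h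
/-! ### Hit elements -/

lemma isHit_zero (n d : ℕ) : IsHit n d 0 :=
  ⟨fun _ => 0, fun _ => Submodule.zero_mem _, by simp⟩

lemma isHit_add {n d : ℕ} {u v : P n} (hu : IsHit n d u) (hv : IsHit n d v) :
    IsHit n d (u + v) := by
  obtain ⟨f, hf, hfu⟩ := hu
  obtain ⟨g, hg, hgv⟩ := hv
  refine ⟨f + g, fun i => Submodule.add_mem _ (hf i) (hg i), ?_⟩
  rw [hfu, hgv, ← Finset.sum_add_distrib]
  refine Finset.sum_congr rfl fun i _ => ?_
  simp only [Pi.add_apply, map_add]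

lemma isHit_of_mem_hitSub {n d : ℕ} {u : P n} (hu : u ∈ hitSub n d) : IsHit n d u := by
  induction hu using Submodule.span_induction with
  | mem x hx => exact hx
  | zero => exact isHit_zero n d
  | add x y _ _ hx hy => exact isHit_add hx hy
  | smul c x _ hx =>
      have hc : c = 0 ∨ c = 1 := by revert c; decide
      rcases hc with rfl | rfl
      · rw [zero_smul]; exact isHit_zero n d
      · rw [one_smul]; exact hx

lemma S5_isHit {u : P 5} (h : IsHit 5 67 u) : IsHit 5 31 (S5 u) := by
  obtain ⟨f, hf, hu⟩ := h
  refine ⟨fun j => if j ∈ Finset.Icc 1 31 then S5 (f (2 * j)) else 0, ?_, ?_⟩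
  · intro j
    by_cases hj : j ∈ Finset.Icc 1 31
    · simp only [if_pos hj]
      rw [Finset.mem_Icc] at hj
      have hj' : 67 - 2 * j = 2 * (31 - j) + 5 := by omega
      apply S5_mem_homSub
      have := hf (2 * j)
      rwa [hj'] at this
    · simp only [if_neg hj]
      exact Submodule.zero_mem _
  · rw [hu, map_sum]
    have hterm : ∀ i, S5 (homogeneousComponent 67 (SqT 5 (f i)))
        = homogeneousComponent 31 (SqT 5 (S5 (f i))) := fun i => by
      rw [S5_homogeneousComponent, S5_SqT]
    rw [Finset.sum_congr rfl fun i _ => hterm i]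
    have himg : (Finset.Icc 1 31).image (fun j => 2 * j) ⊆ Finset.Icc 1 67 := by
      intro i hi
      obtain ⟨j, hj, rfl⟩ := Finset.mem_image.1 hi
      rw [Finset.mem_Icc] at hj ⊢
      omega
    have hzero : ∀ i ∈ Finset.Icc 1 67, i ∉ (Finset.Icc 1 31).image (fun j => 2 * j) →
        homogeneousComponent 31 (SqT 5 (S5 (f i))) = 0 := by
      intro i hi hni
      have hfz : S5 (f i) = 0 := by
        apply S5_eq_zero_of_deg (D := 67 - i) ?_ (hf i)
        intro m hm
        rw [Finset.mem_Icc] at hi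
        have hj : i = 2 * (31 - m) := by omega
        apply hni
        rw [Finset.mem_image]
        exact ⟨31 - m, Finset.mem_Icc.2 (by omega), hj.symm⟩
      rw [hfz, map_zero, map_zero]
    rw [← Finset.sum_subset himg hzero]
    rw [Finset.sum_image (by intro a _ b _ hab; simp only at hab; omega)]
    refine Finset.sum_congr rfl fun j hj => ?_
    simp only [if_pos hj]

/-! ### `cls` lemmas -/

lemma cls_add (n d : ℕ) (f g : P n) : cls n d (f + g) = cls n d f + cls n d g := by
  unfold cls
  rw [← Submodule.Quotient.mk_add]
  congr 1
  exact Subtype.ext (map_add _ f g)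

lemma cls_zero (n d : ℕ) : cls n d 0 = 0 := by
  unfold cls
  have h : (⟨homogeneousComponent d (0 : P n),
      (mem_homogeneousSubmodule _ _).2 (homogeneousComponent_isHomogeneous d 0)⟩ :
      homSub n d) = 0 := Subtype.ext (map_zero _)
  rw [h, Submodule.Quotient.mk_zero]

lemma cls_sum {ι : Type*} (n d : ℕ) (s : Finset ι) (f : ι → P n) :
    cls n d (∑ i ∈ s, f i) = ∑ i ∈ s, cls n d (f i) := by
  classical
  induction s using Finset.induction with
  | empty => simpa using cls_zero n d
  | insert _ _ hx ih =>
      rw [Finset.sum_insert hx, Finset.sum_insert hx, cls_add, ih]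

set_option maxHeartbeats 1000000 in
lemma cls_eq_zero_iff (n d : ℕ) (f : P n) :
    cls n d f = 0 ↔ homogeneousComponent d f ∈ hitSub n d := by
  unfold cls
  constructor
  · intro h
    exact (Submodule.Quotient.mk_eq_zero ((hitSub n d).comap (homSub n d).subtype)).1 h
  · intro h
    exact (Submodule.Quotient.mk_eq_zero ((hitSub n d).comap (homSub n d).subtype)).2 h
/-! ### The monomial order via lexicographic keys -/

/-- A key in a genuine linear order encoding `monLt`. -/
def key (a : Fin 5 →₀ ℕ) : Lex (Lex (ℕ → ℕ) × Lex (Fin 5 →₀ ℕ)) :=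
  toLex (toLex (wVec a), toLex a)

lemma monLt_of_key_lt {a b : Fin 5 →₀ ℕ} (h : key a < key b) : monLt a b := by
  rcases Prod.Lex.lt_iff.1 h with h1 | ⟨h1, h2⟩
  · left
    exact h1
  · right
    refine ⟨?_, h2⟩
    have : ofLex (toLex (wVec a)) = ofLex (toLex (wVec b)) := congrArg ofLex h1
    exact this

lemma key_injective : Function.Injective key := by
  intro a b h
  have h2 : (ofLex (key a)).2 = (ofLex (key b)).2 := congrArg (fun x => (ofLex x).2) h
  exact congrArg ofLex h2

lemma exists_monLt_max (T : Finset (Fin 5 →₀ ℕ)) (h : T.Nonempty) :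
    ∃ a ∈ T, ∀ b ∈ T, b ≠ a → monLt b a := by
  obtain ⟨a, ha, hmax⟩ := T.exists_max_image key h
  exact ⟨a, ha, fun b hb hne =>
    monLt_of_key_lt (lt_of_le_of_ne (hmax b hb) (fun hk => hne (key_injective hk)))⟩

/-! ### `Phi` on monomials -/

/-- The all-ones exponent vector. -/
def onesF : Fin 5 →₀ ℕ := Finsupp.equivFunOnFinite.symm fun _ => 1

lemma onesF_apply (i : Fin 5) : onesF i = 1 := rfl

lemma prodX : (∏ i : Fin 5, (X i : P 5)) = mono onesF := by
  have hsup : onesF.support = Finset.univ := by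
    ext i
    simp only [Finsupp.mem_support_iff, onesF_apply, Finset.mem_univ, iff_true]
    omega
  have h : ∏ i ∈ onesF.support, (X i : P 5) ^ onesF i = ∏ i : Fin 5, (X i : P 5) := by
    rw [hsup]
    exact Finset.prod_congr rfl fun i _ => by rw [onesF_apply, pow_one]
  rw [mono, ← prod_X_pow_eq_monomial, h]

lemma Phi_mono (a : Fin 5 →₀ ℕ) : Phi (mono a) = mono (onesF + 2 • a) := by
  rw [Phi, prodX, mono_sq, mono_mul]

lemma degA_onesF_add (a : Fin 5 →₀ ℕ) : degA (onesF + 2 • a) = 2 * degA a + 5 := by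
  show (∑ i, (onesF + 2 • a) i) = 2 * (∑ i, a i) + 5
  have happ : ∀ i : Fin 5, (onesF + 2 • a) i = 1 + 2 * a i := by
    intro i
    simp [onesF_apply, Finsupp.add_apply, Finsupp.smul_apply]
  rw [Finset.sum_congr rfl fun i _ => happ i, Finset.sum_add_distrib, ← Finset.mul_sum]
  simp
  omega

lemma S5_onesF : S5 (mono onesF) = 1 := by
  rw [S5_mono, if_pos (fun i => by rw [onesF_apply]; exact odd_one)]
  have h0 : (Finsupp.equivFunOnFinite.symm fun i : Fin 5 => onesF i / 2) = 0 := by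
    ext i
    simp [onesF_apply]
  rw [h0, mono, monomial_zero', map_one]

lemma S5_Phi (a : Fin 5 →₀ ℕ) : S5 (Phi (mono a)) = mono a := by
  rw [Phi, prodX, S5_mul_sq, S5_onesF, one_mul]

/-! ### The core argument -/

lemma core (T : Finset (Fin 5 →₀ ℕ)) (hT : ∀ a ∈ T, degA a = 31 ∧ Admissible a)
    (h : ∑ a ∈ T, cls 5 67 (Phi (mono a)) = 0) : T = ∅ := by
  by_contra hne
  rw [← Ne, ← Finset.nonempty_iff_ne_empty] at hne
  obtain ⟨amax, haT, hmax⟩ := exists_monLt_max T hne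
  have hdeg : ∀ a ∈ T, degA (onesF + 2 • a) = 67 := fun a ha => by
    rw [degA_onesF_add, (hT a ha).1]
  have hsum : cls 5 67 (∑ a ∈ T, Phi (mono a)) = 0 := by rw [cls_sum]; exact h
  rw [cls_eq_zero_iff] at hsum
  have hcomp : homogeneousComponent 67 (∑ a ∈ T, Phi (mono a)) = ∑ a ∈ T, Phi (mono a) := by
    rw [map_sum]
    refine Finset.sum_congr rfl fun a ha => ?_
    rw [Phi_mono, homogeneousComponent_mono, if_pos (hdeg a ha), ← Phi_mono]
  rw [hcomp] at hsum
  have hhit67 : IsHit 5 67 (∑ a ∈ T, Phi (mono a)) := isHit_of_mem_hitSub hsum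
  have hhit31 : IsHit 5 31 (∑ a ∈ T, mono a) := by
    have h2 := S5_isHit hhit67
    rwa [map_sum, Finset.sum_congr rfl fun a _ => S5_Phi a] at h2
  obtain ⟨hd31, hadm⟩ := hT amax haT
  apply hadm
  refine ⟨T.erase amax, ?_, ?_⟩
  · intro b hb
    have hbT := Finset.mem_of_mem_erase hb
    exact ⟨by rw [(hT b hbT).1, hd31], hmax b hbT (Finset.ne_of_mem_erase hb)⟩
  · rw [hd31]
    have heq : mono amax - ∑ b ∈ T.erase amax, mono b = ∑ a ∈ T, mono a := by
      rw [CharTwo.sub_eq_add, Finset.add_sum_erase _ _ haT]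
    rw [heq]
    exact hhit31

lemma zmod2_cases (c : ZMod 2) : c = 0 ∨ c = 1 := by revert c; decide

lemma core' (s : Finset {a : Fin 5 →₀ ℕ // degA a = 31 ∧ Admissible a})
    (hs : ∑ x ∈ s, cls 5 67 (Phi (mono x.val)) = 0) : s = ∅ := by
  classical
  have himg := core (s.image Subtype.val) ?_ ?_
  · exact Finset.image_eq_empty.1 himg
  · intro a ha
    obtain ⟨x, _, rfl⟩ := Finset.mem_image.1 ha
    exact x.2
  · rw [Finset.sum_image (fun x _ y _ hxy => Subtype.ext hxy)]
    exact hs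

end Statement0Aux

open Statement0Aux in
/-- In `(QP_5)_67`, the classes `[x_1x_2x_3x_4x_5 · a²]`, for `a` ranging
over the admissible monomials of degree `31` in `P_5`, are pairwise distinct and
linearly independent over `𝔽₂`. -/
theorem statement0 :
    LinearIndependent (ZMod 2)
      (fun a : {a : Fin 5 →₀ ℕ // degA a = 31 ∧ Admissible a} =>
        cls 5 67 (Phi (mono a.val))) ∧
    Function.Injective
      (fun a : {a : Fin 5 →₀ ℕ // degA a = 31 ∧ Admissible a} =>
        cls 5 67 (Phi (mono a.val))) := by
  classical
  constructor
  · rw [linearIndependent_iff']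
    intro s g hsum i hi
    by_contra hgi
    have hg1 : g i = 1 := (zmod2_cases (g i)).resolve_left hgi
    have hsum2 : ∑ x ∈ s.filter (fun j => g j = 1), cls 5 67 (Phi (mono x.val)) = 0 := by
      rw [← hsum, Finset.sum_filter]
      refine Finset.sum_congr rfl fun j _ => ?_
      by_cases hj : g j = 1
      · rw [if_pos hj, hj, one_smul]
      · rw [if_neg hj, (zmod2_cases (g j)).resolve_right hj, zero_smul]
    have h0 := core' _ hsum2
    have hiT : i ∈ s.filter (fun j => g j = 1) := Finset.mem_filter.2 ⟨hi, hg1⟩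
    rw [h0] at hiT
    exact Finset.notMem_empty _ hiT
  · intro x y hxy
    by_contra hne
    have hsum : ∑ z ∈ ({x, y} : Finset _), cls 5 67 (Phi (mono z.val)) = 0 := by
      rw [Finset.sum_pair hne]
      show cls 5 67 (Phi (mono x.val)) + cls 5 67 (Phi (mono y.val)) = 0
      have hxy' : cls 5 67 (Phi (mono x.val)) = cls 5 67 (Phi (mono y.val)) := hxy
      rw [hxy']
      have h2 : cls 5 67 (Phi (mono y.val)) + cls 5 67 (Phi (mono y.val))
          = ((1 : ZMod 2) + 1) • cls 5 67 (Phi (mono y.val)) := by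
        rw [add_smul, one_smul]
      rw [h2, show (1 : ZMod 2) + 1 = 0 from by decide, zero_smul]
    have h0 := core' _ hsum
    have hx : x ∈ ({x, y} : Finset _) := by simp
    rw [h0] at hx
    exact Finset.notMem_empty _ hx

end
end

section
/- Every admissible monomial u of degree 67 in P_5 satisfies ω_1(u) = 3 or ω_1(u) = 5. -/
open MvPolynomial

noncomputable section

lemma aux_degree_eq_degA {n : ℕ} (a : Fin n →₀ ℕ) : a.degree = degA a :=
  Finset.sum_subset (Finset.subset_univ _)
    (fun i _ hi => Finsupp.notMem_support_iff.mp hi)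

lemma aux_degree_add {n : ℕ} (u v : Fin n →₀ ℕ) :
    (u + v).degree = u.degree + v.degree := by
  simp only [aux_degree_eq_degA, degA, Finsupp.add_apply, Finset.sum_add_distrib]

lemma aux_degree_single {n : ℕ} (j : Fin n) (m : ℕ) :
    (Finsupp.single j m).degree = m := by
  rcases eq_or_ne m 0 with h | h
  · simp [h]
  · simp [Finsupp.degree_apply, Finsupp.support_single_ne_zero j h]

lemma aux_hc_mono_mul_zero {n : ℕ} (d : Fin n →₀ ℕ) (c : ZMod 2) (h : P n) (m : ℕ)
    (hm : m < d.degree) :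
    homogeneousComponent m (monomial d c * h) = 0 := by
  apply homogeneousComponent_eq_zero'
  intro e he
  have hsub := support_mul (monomial d c) h he
  rw [Finset.mem_add] at hsub
  obtain ⟨u, hu, v, hv, rfl⟩ := hsub
  have hud : u = d := by
    by_cases hc : c = 0 <;> simp [support_monomial, hc] at hu
    exact hu
  subst hud
  rw [aux_degree_add]
  omega

lemma aux_factor {n : ℕ} (i : Fin n) (c : ℕ) :
    ∃ r : P n, (X i + X i ^ 2 : P n) ^ c = X i ^ (2 * c) + r ∧
      r.totalDegree ≤ 2 * c - 1 := by
  refine ⟨∑ t ∈ Finset.range c, (X i ^ 2 : P n) ^ t * X i ^ (c - t) * (c.choose t : P n),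
    ?_, ?_⟩
  · rw [add_comm (X i) (X i ^ 2), add_pow, Finset.sum_range_succ]
    have h1 : ((X i ^ 2 : P n) ^ c * X i ^ (c - c) * (c.choose c : P n)) = X i ^ (2 * c) := by
      simp [Nat.choose_self, pow_mul]
    rw [h1, add_comm]
  · apply (totalDegree_finset_sum _ _).trans
    apply Finset.sup_le
    intro t ht
    have ht' : t < c := Finset.mem_range.mp ht
    have b1 : ((X i ^ 2 : P n) ^ t).totalDegree ≤ 2 * t := by
      simpa [pow_mul] using le_of_eq (totalDegree_X_pow i (2 * t))
    have b2 : ((X i : P n) ^ (c - t)).totalDegree ≤ c - t :=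
      le_of_eq (totalDegree_X_pow i (c - t))
    have b3 : ((c.choose t : P n)).totalDegree = 0 := by
      rw [show ((c.choose t : P n)) = C ((c.choose t : ZMod 2)) from
        (map_natCast (C : ZMod 2 →+* P n) _).symm]
      exact totalDegree_C _
    have := totalDegree_mul ((X i ^ 2 : P n) ^ t * X i ^ (c - t)) ((c.choose t : P n))
    have := totalDegree_mul ((X i ^ 2 : P n) ^ t) ((X i : P n) ^ (c - t))
    omega



lemma aux_prod_decomp {n : ℕ} (s : Finset (Fin n)) (b : Fin n → ℕ)
    (hb : ∀ i ∈ s, 1 ≤ b i) :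
    ∃ r : P n, ∏ i ∈ s, (X i + X i ^ 2 : P n) ^ b i
      = ∏ i ∈ s, (X i : P n) ^ (2 * b i) + r ∧
      (r = 0 ∨ r.totalDegree < 2 * ∑ i ∈ s, b i) := by
  classical
  induction s using Finset.induction_on with
  | empty => exact ⟨0, by simp, Or.inl rfl⟩
  | @insert i₀ s hi₀ ih =>
    obtain ⟨R, hR, hR'⟩ := ih (fun i hi => hb i (Finset.mem_insert_of_mem hi))
    obtain ⟨r, hr, hr'⟩ := aux_factor i₀ (b i₀)
    have hc1 : 1 ≤ b i₀ := hb i₀ (Finset.mem_insert_self _ _)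
    set Q : P n := ∏ i ∈ s, (X i : P n) ^ (2 * b i) with hQdef
    have hQ : Q.totalDegree ≤ 2 * ∑ i ∈ s, b i := by
      rw [Finset.mul_sum]
      apply (totalDegree_finset_prod _ _).trans
      apply Finset.sum_le_sum
      intro i _
      exact le_of_eq (totalDegree_X_pow i (2 * b i))
    refine ⟨X i₀ ^ (2 * b i₀) * R + r * Q + r * R, ?_, ?_⟩
    · rw [Finset.prod_insert hi₀, Finset.prod_insert hi₀, hR, hr, ← hQdef]
      ring
    · right
      rw [Finset.sum_insert hi₀]
      have trQ := totalDegree_mul r Q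
      have trR := totalDegree_mul r R
      have tXR := totalDegree_mul ((X i₀ : P n) ^ (2 * b i₀)) R
      rw [totalDegree_X_pow] at tXR
      rcases hR' with h0 | hRlt
      · rw [h0]
        simp only [mul_zero, zero_add, add_zero]
        have := totalDegree_mul r Q
        omega
      · have hmax : (X i₀ ^ (2 * b i₀) * R + r * Q + r * R).totalDegree ≤
            max (max ((X i₀ ^ (2 * b i₀) * R : P n)).totalDegree ((r * Q).totalDegree))
              ((r * R).totalDegree) :=
          (totalDegree_add _ _).trans (max_le_max (totalDegree_add _ _) le_rfl)
        have h1 : ((X i₀ ^ (2 * b i₀) * R : P n)).totalDegree < 2 * (b i₀ + ∑ i ∈ s, b i) := by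
          omega
        have h2 : ((r * Q : P n)).totalDegree < 2 * (b i₀ + ∑ i ∈ s, b i) := by omega
        have h3 : ((r * R : P n)).totalDegree < 2 * (b i₀ + ∑ i ∈ s, b i) := by omega
        omega

lemma aux_SqT_mono {n : ℕ} (b : Fin n →₀ ℕ) :
    SqT n (mono b) = b.prod fun i c => (X i + X i ^ 2 : P n) ^ c := by
  unfold SqT mono
  rw [aeval_monomial]
  simp

lemma aux_mono_dvd_SqT {n : ℕ} (b : Fin n →₀ ℕ) : mono b ∣ SqT n (mono b) := by
  rw [aux_SqT_mono]
  refine ⟨∏ i ∈ b.support, (1 + X i : P n) ^ b i, ?_⟩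
  rw [Finsupp.prod, show (mono b : P n) = ∏ i ∈ b.support, (X i : P n) ^ b i from
    (prod_X_pow_eq_monomial).symm, ← Finset.prod_mul_distrib]
  apply Finset.prod_congr rfl
  intro i _
  rw [show (X i + X i ^ 2 : P n) = X i * (1 + X i) by ring, mul_pow]

lemma aux_SqT_mono_decomp {n : ℕ} (b : Fin n →₀ ℕ) :
    ∃ r : P n, SqT n (mono b) = (mono b) ^ 2 + r ∧
      (r = 0 ∨ r.totalDegree < 2 * degA b) := by
  obtain ⟨r, hr, hr'⟩ := aux_prod_decomp b.support b
    (fun i hi => Nat.one_le_iff_ne_zero.2 (Finsupp.mem_support_iff.mp hi))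
  have hsum : ∑ i ∈ b.support, b i = degA b := aux_degree_eq_degA b
  refine ⟨r, ?_, by rwa [hsum] at hr'⟩
  rw [aux_SqT_mono, Finsupp.prod, hr]
  congr 1
  rw [show (mono b : P n) = ∏ i ∈ b.support, (X i : P n) ^ b i from
    (prod_X_pow_eq_monomial).symm, ← Finset.prod_pow]
  apply Finset.prod_congr rfl
  intro i _
  rw [← pow_mul, mul_comm]



lemma aux_hit (a : Fin 5 →₀ ℕ) (h1 : degA a = 67) (j : Fin 5) (hj : a j % 2 = 1)
    (hrest : ∀ i, i ≠ j → a i % 2 = 0) : IsHit 5 67 (mono a) := by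
  classical
  -- the half exponent vector
  set b : Fin 5 →₀ ℕ := a.mapRange (· / 2) (by norm_num) with hbdef
  have hb_apply : ∀ i, b i = a i / 2 := fun i => rfl
  have hab : a = Finsupp.single j 1 + (b + b) := by
    ext i
    simp only [Finsupp.add_apply, Finsupp.single_apply, hb_apply]
    split_ifs with h
    · subst h; omega
    · have := hrest i (fun hh => h hh.symm); omega
  have hdegb : degA b = 33 := by
    have : degA a = 1 + (degA b + degA b) := by
      rw [← aux_degree_eq_degA, hab, aux_degree_add, aux_degree_add, aux_degree_single,
        aux_degree_eq_degA]
    omega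
  have hbdeg : b.degree = 33 := by rw [aux_degree_eq_degA]; exact hdegb
  -- key monomial identity
  have hmono : mono a = X j * (mono b) ^ 2 := by
    have h2b : a = Finsupp.single j 1 + 2 • b := by rw [hab, two_smul]
    rw [mono, mono, monomial_pow, ← pow_one (X j : P 5), X_pow_eq_monomial, monomial_mul, h2b]
    norm_num
  -- homogeneity of the pieces
  have hpiece : ∀ m : ℕ, (X j ^ m * mono b : P 5) ∈
      homogeneousSubmodule (Fin 5) (ZMod 2) (m + 33) := by
    intro m
    rw [X_pow_eq_monomial, mono, monomial_mul, mem_homogeneousSubmodule]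
    apply isHomogeneous_monomial
    rw [aux_degree_add, aux_degree_single, hbdeg]
  -- the certificate
  set F : ℕ → P 5 := fun i =>
    if i = 33 then X j ^ 1 * mono b else
    if i = 32 then X j ^ 2 * mono b else
    if i = 30 then X j ^ 4 * mono b else
    if i = 26 then X j ^ 8 * mono b else
    if i = 18 then X j ^ 16 * mono b else
    if i = 2 then X j ^ 32 * mono b else 0 with hF
  have hF33 : F 33 = X j ^ 1 * mono b := by simp only [hF]; norm_num
  have hF32 : F 32 = X j ^ 2 * mono b := by simp only [hF]; norm_num
  have hF30 : F 30 = X j ^ 4 * mono b := by simp only [hF]; norm_num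
  have hF26 : F 26 = X j ^ 8 * mono b := by simp only [hF]; norm_num
  have hF18 : F 18 = X j ^ 16 * mono b := by simp only [hF]; norm_num
  have hF2 : F 2 = X j ^ 32 * mono b := by simp only [hF]; norm_num
  refine ⟨F, ?_, ?_⟩
  · intro i
    simp only [hF]
    split_ifs with i33 i32 i30 i26 i18 i2
    · subst i33; simpa using hpiece 1
    · subst i32; simpa using hpiece 2
    · subst i30; simpa using hpiece 4
    · subst i26; simpa using hpiece 8
    · subst i18; simpa using hpiece 16
    · subst i2; simpa using hpiece 32
    · exact Submodule.zero_mem _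
  · -- the main identity
    set G : P 5 := SqT 5 (mono b) with hGdef
    have hS : ∀ m : ℕ, SqT 5 (X j ^ m * mono b) = (X j + X j ^ 2 : P 5) ^ m * G := by
      intro m
      rw [map_mul, map_pow, hGdef]
      refine congrArg (· * _) (congrArg (· ^ m) ?_)
      unfold SqT
      simp
    have h2 : (2 : P 5) = 0 := by
      have : ((2 : ℕ) : P 5) = 0 := CharP.cast_eq_zero (P 5) 2
      simpa using this
    -- restrict the sum to the six relevant indices
    have hsubset : ({2, 18, 26, 30, 32, 33} : Finset ℕ) ⊆ Finset.Icc 1 67 := by decide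
    rw [← Finset.sum_subset hsubset]
    · -- expand the six-term sum
      rw [Finset.sum_insert (by decide), Finset.sum_insert (by decide),
        Finset.sum_insert (by decide), Finset.sum_insert (by decide),
        Finset.sum_insert (by decide), Finset.sum_singleton]
      rw [hF2, hF18, hF26, hF30, hF32, hF33]
      rw [hS 32, hS 16, hS 8, hS 4, hS 2, hS 1]
      rw [← map_add, ← map_add, ← map_add, ← map_add, ← map_add]
      have e32 : (X j + X j ^ 2 : P 5) ^ 32 = X j ^ 32 + X j ^ 64 := by
        rw [show (32 : ℕ) = 2 ^ 5 by norm_num, add_pow_char_pow, ← pow_mul]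
        norm_num
      have e16 : (X j + X j ^ 2 : P 5) ^ 16 = X j ^ 16 + X j ^ 32 := by
        rw [show (16 : ℕ) = 2 ^ 4 by norm_num, add_pow_char_pow, ← pow_mul]
        norm_num
      have e8 : (X j + X j ^ 2 : P 5) ^ 8 = X j ^ 8 + X j ^ 16 := by
        rw [show (8 : ℕ) = 2 ^ 3 by norm_num, add_pow_char_pow, ← pow_mul]
        norm_num
      have e4 : (X j + X j ^ 2 : P 5) ^ 4 = X j ^ 4 + X j ^ 8 := by
        rw [show (4 : ℕ) = 2 ^ 2 by norm_num, add_pow_char_pow, ← pow_mul]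
        norm_num
      have e2 : (X j + X j ^ 2 : P 5) ^ 2 = X j ^ 2 + X j ^ 4 := by
        linear_combination (X j * X j ^ 2 : P 5) * h2
      have hpow : ((X j + X j ^ 2 : P 5) ^ 32 * G + ((X j + X j ^ 2) ^ 16 * G +
          ((X j + X j ^ 2) ^ 8 * G + ((X j + X j ^ 2) ^ 4 * G +
          ((X j + X j ^ 2) ^ 2 * G + (X j + X j ^ 2) ^ 1 * G))))) =
          X j * G + X j ^ 64 * G := by
        rw [e32, e16, e8, e4, e2, pow_one]
        linear_combination ((X j ^ 2 + X j ^ 4 + X j ^ 8 + X j ^ 16 + X j ^ 32 : P 5) * G) * h2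
      rw [hpow, map_add]
      -- part (B): the x^64 term vanishes
      obtain ⟨h, hh⟩ := aux_mono_dvd_SqT b
      have hB : homogeneousComponent 67 (X j ^ 64 * G) = 0 := by
        rw [hGdef, hh, ← mul_assoc, X_pow_eq_monomial, mono, monomial_mul]
        apply aux_hc_mono_mul_zero
        rw [aux_degree_add, aux_degree_single, hbdeg]
        omega
      -- part (A)
      obtain ⟨r, hG, hr⟩ := aux_SqT_mono_decomp b
      have hmem : mono a ∈ homogeneousSubmodule (Fin 5) (ZMod 2) 67 := by
        rw [mono, mem_homogeneousSubmodule]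
        exact isHomogeneous_monomial 1 (by rw [aux_degree_eq_degA, h1])
      have hA : homogeneousComponent 67 (X j * G) = mono a := by
        rw [hGdef, hG, mul_add, map_add]
        have hA1 : homogeneousComponent 67 (X j * (mono b) ^ 2) = mono a := by
          rw [← hmono, homogeneousComponent_of_mem hmem]
          simp
        have hA2 : homogeneousComponent 67 (X j * r) = 0 := by
          rcases hr with h0 | hlt
          · rw [h0]; simp
          · apply homogeneousComponent_eq_zero
            have := totalDegree_mul (X j : P 5) r
            rw [totalDegree_X] at this
            omega
        rw [hA1, hA2, add_zero]
      rw [hA, hB, add_zero]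
    · -- vanishing outside the six indices
      intro i _ hi
      simp only [Finset.mem_insert, Finset.mem_singleton] at hi
      push_neg at hi
      obtain ⟨n2, n18, n26, n30, n32, n33⟩ := hi
      have : F i = 0 := by
        simp only [hF]
        simp [n2, n18, n26, n30, n32, n33]
      rw [this]
      simp


/-- every admissible monomial `u = x^a` of degree `67` in `P_5` satisfies
`ω_1(u) = 3` or `ω_1(u) = 5`. -/
theorem statement12 (a : Fin 5 →₀ ℕ) (h1 : degA a = 67) (h2 : Admissible a) :
    wVec a 0 = 3 ∨ wVec a 0 = 5 := by
  by_contra hcon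
  push_neg at hcon
  obtain ⟨hne3, hne5⟩ := hcon
  have hw : wVec a 0 = ∑ i, a i % 2 := by
    apply Finset.sum_congr rfl
    intro i _
    simp only [Nat.testBit_zero, decide_eq_true_eq]
    split_ifs with h <;> omega
  have hle : wVec a 0 ≤ 5 := by
    rw [hw]
    calc ∑ i : Fin 5, a i % 2 ≤ ∑ _i : Fin 5, 1 :=
          Finset.sum_le_sum (fun i _ => by omega)
      _ = 5 := by simp
  have hpar : (∑ i, a i % 2) % 2 = 1 := by
    have := Finset.sum_nat_mod Finset.univ 2 (fun i => a i)
    have h67 : ∑ i, a i = 67 := h1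
    omega
  have hw1 : wVec a 0 = 1 := by omega
  rw [hw] at hw1
  -- extract the unique odd coordinate
  have ⟨j, hj⟩ : ∃ j, a j % 2 = 1 := by
    by_contra hno
    push_neg at hno
    have : ∑ i, a i % 2 = 0 := Finset.sum_eq_zero fun i _ => by have := hno i; omega
    omega
  have hrest : ∀ i, i ≠ j → a i % 2 = 0 := by
    intro i hi
    have hsplit := Finset.add_sum_erase Finset.univ (fun i : Fin 5 => a i % 2)
      (Finset.mem_univ j)
    have hz : ∑ i' ∈ Finset.univ.erase j, a i' % 2 = 0 := by omega
    have := (Finset.sum_eq_zero_iff.mp hz) i (Finset.mem_erase.mpr ⟨hi, Finset.mem_univ i⟩)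
    exact this
  exact h2 ⟨∅, fun b hb => absurd hb (Finset.notMem_empty b), by
    rw [h1, Finset.sum_empty, sub_zero]
    exact aux_hit a h1 j hj hrest⟩

end
end
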